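/- The function ψ(z) = (1 − √2·cosh((π/4)√(μz/c − 1))) / (1 + √2·cosh((π/4)√(μz/c − 1))) is a conformal (holomorphic bijective) map from the interior of the parabola {u + iv : v² = (16c/μ)(u + 3c/μ)} onto the open unit disk, with ψ(0) = 0 and ψ(−3c/μ) = 1. -/

import Mathlib

open Complex Real

noncomputable section

/-- square of the principal square root -/
lemma sq_cpow_half (w : ℂ) : (w ^ (1/2 : ℂ)) ^ 2 = w := by
  rcases eq_or_ne w 0 with rfl | hw
  · simp [Complex.zero_cpow (by norm_num : (1/2:ℂ) ≠ 0)]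
  · rw [sq, ← Complex.cpow_add _ _ hw]
    norm_num

lemma re_cpow_half_nonneg (w : ℂ) : 0 ≤ (w ^ (1/2 : ℂ)).re := by
  rcases eq_or_ne w 0 with rfl | hw
  · simp [Complex.zero_cpow (by norm_num : (1/2:ℂ) ≠ 0)]
  · rw [Complex.cpow_def_of_ne_zero hw, Complex.exp_re]
    have him : (Complex.log w * (1/2)).im = w.arg / 2 := by
      simp [Complex.mul_im, Complex.log_im, Complex.log_re]; ring
    rw [him]
    have h1 : w.arg / 2 ≤ π / 2 := by linarith [Complex.arg_le_pi w]
    have h2 : -(π/2) < w.arg / 2 := by linarith [Complex.neg_pi_lt_arg w]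
    exact mul_nonneg (Real.exp_pos _).le
      (Real.cos_nonneg_of_mem_Icc ⟨by linarith, h1⟩)


lemma im_cpow_half_nonneg_of_re_eq_zero (w : ℂ) (h : (w ^ (1/2 : ℂ)).re = 0) :
    0 ≤ (w ^ (1/2 : ℂ)).im := by
  rcases eq_or_ne w 0 with rfl | hw
  · simp [Complex.zero_cpow (by norm_num : (1/2:ℂ) ≠ 0)]
  · rw [Complex.cpow_def_of_ne_zero hw] at h ⊢
    rw [Complex.exp_re] at h
    rw [Complex.exp_im]
    have him : (Complex.log w * (1/2)).im = w.arg / 2 := by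
      simp [Complex.mul_im, Complex.log_im, Complex.log_re]; ring
    rw [him] at h ⊢
    have hcos : Real.cos (w.arg / 2) = 0 := by
      have := (Real.exp_pos (Complex.log w * (1/2)).re)
      rcases mul_eq_zero.1 h with h' | h'
      · exact absurd h' this.ne'
      · exact h'
    have h1 : w.arg / 2 ≤ π / 2 := by linarith [Complex.arg_le_pi w]
    have h2 : -(π/2) < w.arg / 2 := by linarith [Complex.neg_pi_lt_arg w]
    -- cos = 0 with arg/2 ∈ (-π/2, π/2] forces arg/2 = π/2
    have harg : w.arg / 2 = π / 2 := by
      by_contra hne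
      have hlt : w.arg / 2 < π / 2 := lt_of_le_of_ne h1 hne
      have := Real.cos_pos_of_mem_Ioo (Set.mem_Ioo.2 ⟨h2, hlt⟩)
      linarith
    rw [harg, Real.sin_pi_div_two]
    positivity

/-- uniqueness: principal sqrt of `v^2` is `v` when `v` is in the closed right
half plane with nonneg imaginary part on the boundary -/
lemma cpow_half_of_sq (v : ℂ) (h1 : 0 ≤ v.re) (h2 : v.re = 0 → 0 ≤ v.im) :
    (v ^ 2) ^ (1/2 : ℂ) = v := by
  set s := (v ^ 2) ^ (1/2 : ℂ) with hs
  have hsq : s ^ 2 = v ^ 2 := sq_cpow_half _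
  have : (s - v) * (s + v) = 0 := by ring_nf; linear_combination hsq
  rcases mul_eq_zero.1 this with h | h
  · exact sub_eq_zero.1 h
  · have hsv : s = -v := eq_neg_of_add_eq_zero_left h
    have hres : 0 ≤ s.re := re_cpow_half_nonneg _
    have hre0 : v.re = 0 := by
      rw [hsv] at hres; simp at hres; linarith
    have him0 : v.im = 0 := by
      have h2' := h2 hre0
      have : 0 ≤ s.im := im_cpow_half_nonneg_of_re_eq_zero _ (by rw [← hs, hsv]; simp [hre0])
      rw [hsv] at this; simp at this; linarith
    have hv : v = 0 := Complex.ext hre0 him0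
    rw [hsv, hv, neg_zero]

lemma cosh_of_sq_eq {u v : ℂ} (h : u ^ 2 = v ^ 2) : Complex.cosh u = Complex.cosh v := by
  have : (u - v) * (u + v) = 0 := by linear_combination h
  rcases mul_eq_zero.1 this with h' | h'
  · rw [sub_eq_zero.1 h']
  · rw [eq_neg_of_add_eq_zero_left h', Complex.cosh_neg]

lemma cosh_re' (z : ℂ) : (Complex.cosh z).re = Real.cosh z.re * Real.cos z.im := by
  rw [Complex.cosh, Complex.div_re]
  simp [Complex.add_re, Complex.exp_re, Complex.add_im, Complex.exp_im, Complex.normSq,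
    Real.cosh_eq, Real.exp_neg]
  ring

/-- membership in the half-strip domain for arccosh -/
def Qset (t : ℂ) : Prop :=
  (0 < t.re ∧ |t.im| < π/2) ∨ (t.re = 0 ∧ 0 ≤ t.im ∧ t.im < π/2)

lemma Qset.re_nonneg {t : ℂ} (h : Qset t) : 0 ≤ t.re := by
  rcases h with ⟨h,_⟩|⟨h,_⟩; exacts [h.le, h.ge]

lemma Qset.abs_im_lt {t : ℂ} (h : Qset t) : |t.im| < π/2 := by
  rcases h with ⟨_,h⟩|⟨_,h1,h2⟩
  · exact h
  · rw [_root_.abs_of_nonneg h1]; exact h2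

lemma cosh_inj_on_Q {t1 t2 : ℂ} (h1 : Qset t1) (h2 : Qset t2)
    (h : Complex.cosh t1 = Complex.cosh t2) : t1 = t2 := by
  have e1ne := Complex.exp_ne_zero t1
  have e2ne := Complex.exp_ne_zero t2
  have hpoly := h
  rw [Complex.cosh, Complex.cosh, Complex.exp_neg, Complex.exp_neg] at hpoly
  field_simp at hpoly
  have hfac : (Complex.exp t1 - Complex.exp t2) * (Complex.exp t1 * Complex.exp t2 - 1) = 0 := by
    linear_combination hpoly
  have hpi := Real.pi_pos
  rcases mul_eq_zero.1 hfac with h' | h'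
  · have hee : Complex.exp t1 = Complex.exp t2 := sub_eq_zero.1 h'
    obtain ⟨n, hn⟩ := Complex.exp_eq_exp_iff_exists_int.1 hee
    have him : t1.im = t2.im + (n : ℝ) * (2 * π) := by
      have := congrArg Complex.im hn
      simpa [Complex.add_im, Complex.mul_im, Complex.mul_re] using this
    have hn0 : n = 0 := by
      by_contra hne
      have h1le : (1:ℝ) ≤ |(n:ℝ)| := by exact_mod_cast Int.one_le_abs (by omega)
      have b1 := h1.abs_im_lt
      have b2 := h2.abs_im_lt
      rcases le_or_gt 1 (n:ℝ) with hp | hp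
      · rw [abs_lt] at b1 b2; nlinarith
      · have : (n:ℝ) ≤ -1 := by
          rcases abs_cases (n:ℝ) with ⟨he,_⟩|⟨he,_⟩ <;> linarith
        rw [abs_lt] at b1 b2; nlinarith
    rw [hn0] at hn; simpa using hn
  · have hee : Complex.exp (t1 + t2) = 1 := by rw [Complex.exp_add]; linear_combination h'
    obtain ⟨n, hn⟩ := Complex.exp_eq_one_iff.1 hee
    have hre : t1.re + t2.re = 0 := by
      have := congrArg Complex.re hn
      simpa [Complex.add_re, Complex.mul_re] using this
    have hre1 : t1.re = 0 := by linarith [h1.re_nonneg, h2.re_nonneg]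
    have hre2 : t2.re = 0 := by linarith [h1.re_nonneg, h2.re_nonneg]
    have q1 : 0 ≤ t1.im ∧ t1.im < π/2 := by
      rcases h1 with ⟨h',_⟩|⟨_,h'⟩; · exact absurd hre1 h'.ne'
      exact h'
    have q2 : 0 ≤ t2.im ∧ t2.im < π/2 := by
      rcases h2 with ⟨h',_⟩|⟨_,h'⟩; · exact absurd hre2 h'.ne'
      exact h'
    have him : t1.im + t2.im = (n : ℝ) * (2 * π) := by
      have := congrArg Complex.im hn
      simpa [Complex.add_im, Complex.mul_im, Complex.mul_re] using this
    have hn0 : n = 0 := by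
      by_contra hne
      rcases le_or_gt 1 n with hp | hp
      · have : (1:ℝ) ≤ (n:ℝ) := by exact_mod_cast hp
        nlinarith [q1.1, q1.2, q2.1, q2.2]
      · have hp' : n ≤ -1 := by omega
        have : (n:ℝ) ≤ -1 := by exact_mod_cast hp'
        nlinarith [q1.1, q2.1]
    rw [hn0] at him
    simp at him
    have i1 : t1.im = 0 := by linarith [q1.1, q2.1]
    have i2 : t2.im = 0 := by linarith [q1.1, q2.1]
    rw [Complex.ext_iff]
    exact ⟨by rw [hre1, hre2], by rw [i1, i2]⟩

lemma exists_cosh_eq {ζ : ℂ} (hζ : 0 < ζ.re) : ∃ t, Qset t ∧ Complex.cosh t = ζ := by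
  set r : ℂ := (ζ^2 - 1) ^ (1/2 : ℂ) with hrdef
  have hr2 : r ^ 2 = ζ^2 - 1 := sq_cpow_half _
  set e : ℂ := ζ + r with hedef
  have he' : e * (ζ - r) = 1 := by rw [hedef]; linear_combination -hr2
  have hene : e ≠ 0 := left_ne_zero_of_mul_eq_one he'
  have hrre : 0 ≤ r.re := re_cpow_half_nonneg _
  -- sign relation
  have hsign : r.re * r.im = ζ.re * ζ.im := by
    have h' := congrArg Complex.im hr2
    simp only [pow_two, Complex.mul_im, Complex.sub_im, Complex.one_im, sub_zero] at h'
    linarith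
  have hdot : 0 ≤ ζ.re * r.re + ζ.im * r.im := by
    rcases eq_or_lt_of_le hrre with h0 | h0
    · have him : ζ.im = 0 := by
        have h2 := hsign; rw [← h0] at h2; simp at h2
        rcases h2 with h | h
        · exact absurd h hζ.ne'
        · exact h
      rw [him]; nlinarith
    · have key : ζ.im * (r.re * r.im) = ζ.im * (ζ.re * ζ.im) := by rw [hsign]
      nlinarith [key, mul_nonneg hζ.le (sq_nonneg r.re), mul_nonneg hζ.le (sq_nonneg ζ.im),
        mul_pos hζ h0]
  have hre_e : 0 < e.re := by
    rw [hedef]; simp only [Complex.add_re]; linarith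
  have hns : 1 ≤ Complex.normSq e := by
    have hmul : Complex.normSq e * Complex.normSq (ζ - r) = 1 := by
      rw [← Complex.normSq_mul, he', Complex.normSq_one]
    have hge : Complex.normSq (ζ - r) ≤ Complex.normSq e := by
      simp only [Complex.normSq_apply, Complex.add_re, Complex.add_im, Complex.sub_re,
        Complex.sub_im, hedef]
      nlinarith
    nlinarith [Complex.normSq_nonneg (ζ - r), Complex.normSq_nonneg e]
  have habs : 1 ≤ ‖e‖ := by
    have := Complex.sq_norm e
    nlinarith [norm_nonneg e]
  have hcosh : Complex.cosh (Complex.log e) = ζ := by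
    rw [Complex.cosh, Complex.exp_log hene, Complex.exp_neg, Complex.exp_log hene]
    have hinv : e⁻¹ = ζ - r := inv_eq_of_mul_eq_one_right he'
    rw [hinv, hedef]; ring
  have hlogre : 0 ≤ (Complex.log e).re := by
    rw [Complex.log_re]; exact Real.log_nonneg habs
  have hlogim : |(Complex.log e).im| < π/2 := by
    rw [Complex.log_im]
    exact Complex.abs_arg_lt_pi_div_two_iff.2 (Or.inl hre_e)
  rcases eq_or_lt_of_le hlogre with h0 | h0
  · -- boundary : re log e = 0
    rcases le_or_gt 0 (Complex.log e).im with him | him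
    · exact ⟨Complex.log e, Or.inr ⟨h0.symm, him, (abs_lt.1 hlogim).2⟩, hcosh⟩
    · refine ⟨-Complex.log e, Or.inr ⟨by simp [← h0], by simp; linarith,
        by simp; linarith [(abs_lt.1 hlogim).1]⟩, ?_⟩
      rw [Complex.cosh_neg]; exact hcosh
  · exact ⟨Complex.log e, Or.inl ⟨h0, hlogim⟩, hcosh⟩

lemma diffAt_coshsqrt_ne_zero (a : ℂ) {w₀ : ℂ} (h : w₀ ≠ 0) :
    DifferentiableAt ℂ (fun w : ℂ => Complex.cosh (a * w ^ (1/2:ℂ))) w₀ := by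
  rcases (by
    rcases lt_trichotomy w₀.re 0 with h1 | h1 | h1
    · rcases eq_or_ne w₀.im 0 with h2 | h2
      · exact Or.inr ⟨h1, h2⟩
      · exact Or.inl (Or.inr h2)
    · rcases eq_or_ne w₀.im 0 with h2 | h2
      · exact absurd (Complex.ext (by simpa using h1) (by simpa using h2)) h
      · exact Or.inl (Or.inr h2)
    · exact Or.inl (Or.inl h1) : (0 < w₀.re ∨ w₀.im ≠ 0) ∨ (w₀.re < 0 ∧ w₀.im = 0))
    with hslit | ⟨hneg, him⟩
  · have hd : DifferentiableAt ℂ (fun w : ℂ => w ^ (1/2:ℂ)) w₀ :=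
      differentiableAt_id.cpow (differentiableAt_const _) (Complex.mem_slitPlane_iff.2 hslit)
    exact Complex.differentiable_cosh.differentiableAt.comp w₀
      ((differentiableAt_const a).mul hd)
  · -- on the negative real axis : use the other branch
    have hU : IsOpen {w : ℂ | w.re < 0} := isOpen_lt (Complex.continuous_re) continuous_const
    have hmem : {w : ℂ | w.re < 0} ∈ nhds w₀ := hU.mem_nhds (by simpa using hneg)
    have heq : (fun w : ℂ => Complex.cosh (a * (Complex.I * (-w) ^ (1/2:ℂ))))
        =ᶠ[nhds w₀] (fun w : ℂ => Complex.cosh (a * w ^ (1/2:ℂ))) := by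
      filter_upwards [hmem] with w _
      refine cosh_of_sq_eq ?_
      have h1 : ((-w) ^ (1/2:ℂ)) ^ 2 = -w := sq_cpow_half _
      have h2 : (w ^ (1/2:ℂ)) ^ 2 = w := sq_cpow_half _
      rw [mul_pow, mul_pow, mul_pow, h1, h2, Complex.I_sq]
      ring
    have hd : DifferentiableAt ℂ (fun w : ℂ => Complex.cosh (a * (Complex.I * (-w) ^ (1/2:ℂ)))) w₀ := by
      have hdn : DifferentiableAt ℂ (fun w : ℂ => (-w) ^ (1/2:ℂ)) w₀ :=
        (differentiableAt_id.neg).cpow (differentiableAt_const _)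
          (Complex.mem_slitPlane_iff.2 (Or.inl (by simpa using hneg)))
      exact Complex.differentiable_cosh.differentiableAt.comp w₀
        ((differentiableAt_const a).mul ((differentiableAt_const Complex.I).mul hdn))
    exact hd.congr_of_eventuallyEq heq.symm

lemma diff_coshsqrt (a : ℂ) :
    Differentiable ℂ (fun w : ℂ => Complex.cosh (a * w ^ (1/2:ℂ))) := by
  intro w₀
  rcases eq_or_ne w₀ 0 with rfl | hne
  · have hc0 : ContinuousAt (fun w : ℂ => w ^ (1/2:ℂ)) 0 := by
      have h := Complex.continuousAt_cpow_zero_of_re_pos (z := (1/2:ℂ)) (by norm_num)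
      have h2 : ContinuousAt (fun w : ℂ => ((w, (1/2:ℂ)) : ℂ × ℂ)) 0 :=
        continuousAt_id.prodMk continuousAt_const
      exact ContinuousAt.comp (g := fun p : ℂ × ℂ => p.1 ^ p.2)
        (f := fun w : ℂ => ((w, (1/2:ℂ)) : ℂ × ℂ)) (x := (0:ℂ)) h h2
    have hcont : ContinuousAt (fun w : ℂ => Complex.cosh (a * w ^ (1/2:ℂ))) 0 :=
      Complex.continuous_cosh.continuousAt.comp (continuousAt_const.mul hc0)
    have hball : Metric.ball (0:ℂ) 1 ∈ nhds (0:ℂ) :=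
      Metric.ball_mem_nhds _ one_pos
    have hd : DifferentiableOn ℂ (fun w : ℂ => Complex.cosh (a * w ^ (1/2:ℂ)))
        (Metric.ball (0:ℂ) 1) := by
      rw [← Complex.differentiableOn_compl_singleton_and_continuousAt_iff hball]
      exact ⟨fun w hw => (diffAt_coshsqrt_ne_zero a hw.2).differentiableWithinAt, hcont⟩
    exact hd.differentiableAt hball
  · exact diffAt_coshsqrt_ne_zero a hne

set_option maxHeartbeats 1000000 in
/-- `ψ(z) = (1 − √2·cosh((π/4)√(μz/c − 1)))/(1 + √2·cosh((π/4)√(μz/c − 1)))`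
is a conformal (holomorphic bijective) map from the interior of the parabola
`{u+iv : v² = (16c/μ)(u + 3c/μ)}` onto the open unit disk, with `ψ(0) = 0`
and `ψ(−3c/μ) = 1`. -/
theorem stmt_8 (c μ : ℝ) (hc : 0 < c) (hμ : 0 < μ) :
    let ψ : ℂ → ℂ := fun z =>
      (1 - Real.sqrt 2 * Complex.cosh (Complex.ofReal (Real.pi / 4) *
        ((Complex.ofReal (μ / c) * z - 1) ^ (1/2 : ℂ)))) /
      (1 + Real.sqrt 2 * Complex.cosh (Complex.ofReal (Real.pi / 4) *
        ((Complex.ofReal (μ / c) * z - 1) ^ (1/2 : ℂ))))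
    let P : Set ℂ := {z : ℂ | z.im ^ 2 < (16 * c / μ) * (z.re + 3 * c / μ)}
    DifferentiableOn ℂ ψ P ∧ Set.BijOn ψ P (Metric.ball (0 : ℂ) 1) ∧
      ψ 0 = 0 ∧ ψ (Complex.ofReal (-3 * c / μ)) = 1 := by
  intro ψ P
  have hπ := Real.pi_pos
  have hsqrt2 : (0:ℝ) < Real.sqrt 2 := Real.sqrt_pos.2 (by norm_num)
  have hsqrt2sq : Real.sqrt 2 * Real.sqrt 2 = 2 := Real.mul_self_sqrt (by norm_num)
  set W : ℂ → ℂ := fun z => (Complex.ofReal (μ/c)) * z - 1 with hWdef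
  set S : ℂ → ℂ := fun z => W z ^ (1/2:ℂ) with hSdef
  set T : ℂ → ℂ := fun z => (Complex.ofReal (π/4)) * S z with hTdef
  set H : ℂ → ℂ := fun z => (Complex.ofReal (Real.sqrt 2)) * Complex.cosh (T z) with hHdef
  have hψeq : ∀ z, ψ z = (1 - H z) / (1 + H z) := fun z => rfl
  have hSsq : ∀ z, (S z) ^ 2 = W z := fun z => sq_cpow_half _
  have hWre : ∀ z, (W z).re = (μ/c) * z.re - 1 := by
    intro z; simp [hWdef, Complex.sub_re, Complex.mul_re]
  have hWim : ∀ z, (W z).im = (μ/c) * z.im := by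
    intro z; simp [hWdef, Complex.sub_im, Complex.mul_im]
  have hWreS : ∀ z, (W z).re = (S z).re^2 - (S z).im^2 := by
    intro z
    have := congrArg Complex.re (hSsq z)
    simp only [pow_two, Complex.mul_re] at this
    rw [← this]; ring
  have hWimS : ∀ z, (W z).im = 2 * (S z).re * (S z).im := by
    intro z
    have := congrArg Complex.im (hSsq z)
    simp only [pow_two, Complex.mul_im] at this
    rw [← this]; ring
  -- membership characterisation
  have hmemP : ∀ z, z ∈ P ↔ (S z).im^2 < 4 := by
    intro z
    have hk : (0:ℝ) < μ/c := div_pos hμ hc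
    have e1 : (μ/c)*z.re = (S z).re^2 - (S z).im^2 + 1 := by
      have h' := (hWre z).symm.trans (hWreS z); linarith
    have e2 : (μ/c)*z.im = 2*((S z).re*(S z).im) := by
      have h' := (hWim z).symm.trans (hWimS z); linarith
    have h4 : (μ/c)^2 * ((16*c/μ)*(z.re + 3*c/μ)) = 16*((μ/c)*z.re) + 48 := by
      field_simp; ring
    have hmain : z ∈ P ↔ (μ/c)^2 * z.im^2 < (μ/c)^2*((16*c/μ)*(z.re + 3*c/μ)) := by
      show z.im^2 < (16*c/μ)*(z.re + 3*c/μ) ↔ _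
      exact (mul_lt_mul_iff_right₀ (pow_pos hk 2)).symm
    have h5 : (μ/c)^2*z.im^2 = (2*((S z).re*(S z).im))^2 := by rw [← e2]; ring
    rw [hmain, h4, h5, e1]
    constructor
    · intro h; nlinarith [sq_nonneg (S z).re]
    · intro h; nlinarith [sq_nonneg (S z).re]
  have hQ : ∀ z ∈ P, Qset (T z) := by
    intro z hz
    have hyy : (S z).im^2 < 4 := (hmemP z).1 hz
    have hxnn : 0 ≤ (S z).re := re_cpow_half_nonneg _
    have hTre : (T z).re = (π/4) * (S z).re := by
      simp [hTdef, Complex.mul_re]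
    have hTim : (T z).im = (π/4) * (S z).im := by
      simp [hTdef, Complex.mul_im]
    have hy2 : |(S z).im| < 2 := by
      rw [abs_lt]; constructor <;> nlinarith
    have himlt : |(T z).im| < π/2 := by
      rw [hTim, abs_mul, _root_.abs_of_pos (by positivity : (0:ℝ) < π/4)]
      nlinarith [abs_nonneg (S z).im, hπ]
    rcases eq_or_lt_of_le hxnn with h0 | h0
    · refine Or.inr ⟨by rw [hTre, ← h0]; ring, ?_, (abs_lt.1 himlt).2⟩
      have himS : 0 ≤ (S z).im := im_cpow_half_nonneg_of_re_eq_zero _ h0.symm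
      rw [hTim]; positivity
    · exact Or.inl ⟨by rw [hTre]; positivity, himlt⟩
  have hHre : ∀ z ∈ P, 0 < (H z).re := by
    intro z hz
    have habs := (hQ z hz).abs_im_lt
    have hcos : 0 < Real.cos (T z).im :=
      Real.cos_pos_of_mem_Ioo ⟨(abs_lt.1 habs).1, (abs_lt.1 habs).2⟩
    have hre : (H z).re = Real.sqrt 2 * (Real.cosh (T z).re * Real.cos (T z).im) := by
      simp [hHdef, Complex.mul_re, cosh_re']
    rw [hre]
    positivity
  have hden : ∀ z ∈ P, (1:ℂ) + H z ≠ 0 := by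
    intro z hz h0
    have := congrArg Complex.re h0
    simp only [Complex.add_re, Complex.one_re, Complex.zero_re] at this
    linarith [hHre z hz]
  have hHdiff : Differentiable ℂ H := by
    have h1 : Differentiable ℂ W := (differentiable_id.const_mul _).sub_const 1
    have h2 : Differentiable ℂ (fun z => Complex.cosh ((Complex.ofReal (π/4)) * (W z) ^ (1/2:ℂ))) :=
      (diff_coshsqrt (Complex.ofReal (π/4))).comp h1
    exact h2.const_mul _
  have hdiff : DifferentiableOn ℂ ψ P := by
    have : DifferentiableOn ℂ (fun z => (1 - H z) / (1 + H z)) P :=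
      DifferentiableOn.div
        ((differentiableOn_const 1).sub hHdiff.differentiableOn)
        ((differentiableOn_const 1).add hHdiff.differentiableOn) hden
    exact this.congr (fun z _ => hψeq z)
  have hmaps : Set.MapsTo ψ P (Metric.ball (0:ℂ) 1) := by
    intro z hz
    rw [Metric.mem_ball, dist_zero_right, hψeq z, norm_div]
    have hab : ‖1 - H z‖ < ‖1 + H z‖ := by
      rw [Complex.norm_def, Complex.norm_def]
      apply Real.sqrt_lt_sqrt (Complex.normSq_nonneg _)
      simp only [Complex.normSq_apply, Complex.sub_re, Complex.sub_im, Complex.add_re,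
        Complex.add_im, Complex.one_re, Complex.one_im]
      nlinarith [hHre z hz]
    have hpos : 0 < ‖1 + H z‖ :=
      lt_of_le_of_lt (norm_nonneg _) hab
    exact (div_lt_one hpos).2 hab
  have hsqrt2C : (Complex.ofReal (Real.sqrt 2)) ≠ 0 := by
    exact_mod_cast hsqrt2.ne'
  have hπ4C : (Complex.ofReal (π/4)) ≠ 0 := by
    exact_mod_cast (by positivity : (0:ℝ) < π/4).ne'
  have hμcC : (Complex.ofReal (μ/c)) ≠ 0 := by
    exact_mod_cast (div_pos hμ hc).ne'
  have hinj : Set.InjOn ψ P := by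
    intro z1 h1 z2 h2 heq
    rw [hψeq z1, hψeq z2, div_eq_div_iff (hden z1 h1) (hden z2 h2)] at heq
    have hH12 : H z1 = H z2 := by linear_combination -heq/2
    have hcosh : Complex.cosh (T z1) = Complex.cosh (T z2) := by
      simp only [hHdef] at hH12
      exact mul_left_cancel₀ hsqrt2C hH12
    have hT12 : T z1 = T z2 := cosh_inj_on_Q (hQ z1 h1) (hQ z2 h2) hcosh
    have hS12 : S z1 = S z2 := by
      simp only [hTdef] at hT12
      exact mul_left_cancel₀ hπ4C hT12
    have hW12 : W z1 = W z2 := by rw [← hSsq z1, ← hSsq z2, hS12]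
    simp only [hWdef, sub_left_inj] at hW12
    exact mul_left_cancel₀ hμcC hW12
  have hsurj : Set.SurjOn ψ P (Metric.ball (0:ℂ) 1) := by
    intro u hu
    have habsu : ‖u‖ < 1 := by
      simpa [Metric.mem_ball, dist_zero_right] using hu
    have hns : Complex.normSq u < 1 := by
      rw [← Complex.sq_norm]; nlinarith [norm_nonneg u]
    have h1u : (1:ℂ) + u ≠ 0 := by
      intro h
      have : u = -1 := by linear_combination h
      rw [this] at habsu; simp at habsu
    set σ : ℂ := (1 - u)/(1 + u) with hσdef
    have hσre : 0 < σ.re := by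
      rw [hσdef, Complex.div_re, ← add_div]
      apply div_pos
      · simp only [Complex.sub_re, Complex.sub_im, Complex.add_re, Complex.add_im,
          Complex.one_re, Complex.one_im, Complex.normSq_apply] at hns ⊢
        nlinarith
      · exact Complex.normSq_pos.2 h1u
    set ζ : ℂ := σ * (Complex.ofReal (Real.sqrt 2))⁻¹ with hζdef
    have hζre : 0 < ζ.re := by
      rw [hζdef, ← Complex.ofReal_inv]
      simp only [Complex.mul_re, Complex.ofReal_re, Complex.ofReal_im, mul_zero, sub_zero]
      positivity
    obtain ⟨t, hQt, hct⟩ := exists_cosh_eq hζre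
    set s₀ : ℂ := (Complex.ofReal (4/π)) * t with hs₀def
    have hs₀re : s₀.re = (4/π) * t.re := by
      simp [hs₀def, Complex.mul_re]
    have hs₀im : s₀.im = (4/π) * t.im := by
      simp [hs₀def, Complex.mul_im]
    set z : ℂ := (Complex.ofReal (c/μ)) * (s₀^2 + 1) with hzdef
    have hWz : W z = s₀^2 := by
      rw [hWdef, hzdef]
      have h1 : (Complex.ofReal (μ/c)) * (Complex.ofReal (c/μ)) = 1 := by
        rw [← Complex.ofReal_mul]
        norm_cast
        field_simp
      calc (Complex.ofReal (μ/c)) * ((Complex.ofReal (c/μ)) * (s₀^2+1)) - 1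
          = ((Complex.ofReal (μ/c)) * (Complex.ofReal (c/μ))) * (s₀^2+1) - 1 := by ring
        _ = s₀^2 := by rw [h1]; ring
    have hSz : S z = s₀ := by
      rw [hSdef]
      show (W z) ^ (1/2:ℂ) = s₀
      rw [hWz]
      refine cpow_half_of_sq s₀ ?_ ?_
      · rw [hs₀re]
        exact mul_nonneg (by positivity) hQt.re_nonneg
      · intro h0
        rw [hs₀re] at h0
        have htre : t.re = 0 := by
          rcases mul_eq_zero.1 h0 with h' | h'
          · exact absurd h' (by positivity : (0:ℝ) < 4/π).ne'
          · exact h'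
        have him : 0 ≤ t.im := by
          rcases hQt with ⟨h',_⟩|⟨_,h',_⟩
          · exact absurd htre h'.ne'
          · exact h'
        rw [hs₀im]
        positivity
    have hTz : T z = t := by
      rw [hTdef]
      show (Complex.ofReal (π/4)) * S z = t
      rw [hSz, hs₀def, ← mul_assoc, ← Complex.ofReal_mul]
      have : π/4 * (4/π) = 1 := by field_simp
      rw [this, Complex.ofReal_one, one_mul]
    have hzP : z ∈ P := by
      rw [hmemP z, hSz, hs₀im]
      have h1 := hQt.abs_im_lt
      have h2 : t.im^2 < (π/2)^2 := by nlinarith [abs_lt.1 h1]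
      have h3 : ((4:ℝ)/π)^2 * t.im^2 < ((4:ℝ)/π)^2 * (π/2)^2 :=
        mul_lt_mul_of_pos_left h2 (by positivity)
      have h4 : ((4:ℝ)/π)^2 * (π/2)^2 = 4 := by field_simp; ring
      calc ((4:ℝ)/π * t.im)^2 = ((4:ℝ)/π)^2 * t.im^2 := by ring
        _ < 4 := by linarith [h3, h4.le]
    refine ⟨z, hzP, ?_⟩
    rw [hψeq z]
    have hHz : H z = σ := by
      rw [hHdef]
      show (Complex.ofReal (Real.sqrt 2)) * Complex.cosh (T z) = σ
      rw [hTz, hct, hζdef]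
      field_simp
    rw [hHz, hσdef]
    have h2u : (1:ℂ) + (1 - u)/(1 + u) = 2/(1+u) := by field_simp; ring
    have h3u : (1:ℂ) - (1 - u)/(1 + u) = 2*u/(1+u) := by field_simp; ring
    rw [h2u, h3u]
    have hne2 : (2:ℂ)/(1+u) ≠ 0 := div_ne_zero two_ne_zero h1u
    rw [show (2*u/(1+u) : ℂ) = u * (2/(1+u)) from by ring, mul_div_cancel_right₀ _ hne2]
  have hzero : ψ 0 = 0 := by
    rw [hψeq 0]
    have hW0 : W 0 = -1 := by simp [hWdef]
    have hS0 : S 0 = Complex.I := by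
      rw [hSdef]
      show (W 0)^(1/2:ℂ) = Complex.I
      rw [hW0, show (-1 : ℂ) = Complex.I^2 from (Complex.I_sq).symm]
      exact cpow_half_of_sq Complex.I (by simp) (fun _ => by simp)
    have hH0 : H 0 = 1 := by
      rw [hHdef]
      show (Complex.ofReal (Real.sqrt 2)) * Complex.cosh (T 0) = 1
      rw [hTdef]
      show (Complex.ofReal (Real.sqrt 2)) * Complex.cosh (Complex.ofReal (π/4) * S 0) = 1
      rw [hS0, Complex.cosh_mul_I, ← Complex.ofReal_cos, Real.cos_pi_div_four,
        ← Complex.ofReal_mul]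
      have : Real.sqrt 2 * (Real.sqrt 2/2) = 1 := by
        rw [← mul_div_assoc, hsqrt2sq]; norm_num
      rw [this, Complex.ofReal_one]
    rw [hH0]
    norm_num
  have hone : ψ (Complex.ofReal (-3 * c / μ)) = 1 := by
    rw [hψeq]
    have hW1 : W (Complex.ofReal (-3 * c / μ)) = -4 := by
      rw [hWdef]
      show (Complex.ofReal (μ/c)) * (Complex.ofReal (-3 * c / μ)) - 1 = -4
      rw [← Complex.ofReal_mul]
      have h3 : (μ/c) * (-3*c/μ) = -3 := by field_simp
      rw [h3]
      norm_num
    have hS1 : S (Complex.ofReal (-3 * c / μ)) = 2*Complex.I := by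
      rw [hSdef]
      show (W (Complex.ofReal (-3 * c / μ)))^(1/2:ℂ) = 2*Complex.I
      rw [hW1, show (-4 : ℂ) = (2*Complex.I)^2 from by rw [mul_pow, Complex.I_sq]; norm_num]
      exact cpow_half_of_sq (2*Complex.I) (by simp) (fun _ => by simp)
    have hH1 : H (Complex.ofReal (-3 * c / μ)) = 0 := by
      rw [hHdef]
      show (Complex.ofReal (Real.sqrt 2)) * Complex.cosh (T (Complex.ofReal (-3 * c / μ))) = 0
      rw [hTdef]
      show (Complex.ofReal (Real.sqrt 2)) *
        Complex.cosh (Complex.ofReal (π/4) * S (Complex.ofReal (-3 * c / μ))) = 0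
      rw [hS1, show (Complex.ofReal (π/4)) * (2*Complex.I) = (Complex.ofReal (π/2)) * Complex.I
        from by push_cast; ring]
      rw [Complex.cosh_mul_I, ← Complex.ofReal_cos, Real.cos_pi_div_two]
      simp
    rw [hH1]
    norm_num
  exact ⟨hdiff, ⟨hmaps, hinj, hsurj⟩, hzero, hone⟩

end
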